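/- Define T_A(τ) = (27−8τ²)/(18−9τ²) + √((8τ²−9/2)² − 45/4)/(18−9τ²) and T̂_A(τ) = ((3−τ)/2)·T_A(τ). Then for √(9+3√5)/4 ≤ τ ≤ 1, the expression (8τ²−9/2)² − 45/4 is nonnegative, and T̂_A is monotonically increasing with T̂_A(1) = 20/9 and T̂_A(√(9+3√5)/4) = (30+2√5)/11 − (15+√5)√(9+3√5)/66. -/

import Mathlib

noncomputable def TA (τ : ℝ) : ℝ :=
  (27 - 8 * τ ^ 2) / (18 - 9 * τ ^ 2) +
    Real.sqrt ((8 * τ ^ 2 - 9 / 2) ^ 2 - 45 / 4) / (18 - 9 * τ ^ 2)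

noncomputable def hatTA (τ : ℝ) : ℝ := ((3 - τ) / 2) * TA τ

lemma s5sq : (Real.sqrt 5) ^ 2 = 5 := Real.sq_sqrt (by norm_num)
lemma s5lb : (2.236:ℝ) ≤ Real.sqrt 5 := by
  nlinarith [s5sq, Real.sqrt_nonneg 5]
lemma s5ub : Real.sqrt 5 ≤ 2.2361 := by
  nlinarith [s5sq, Real.sqrt_nonneg 5]
lemma sasq : (Real.sqrt (9 + 3 * Real.sqrt 5)) ^ 2 = 9 + 3 * Real.sqrt 5 :=
  Real.sq_sqrt (by nlinarith [Real.sqrt_nonneg 5])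
lemma alb : (0.99:ℝ) ≤ Real.sqrt (9 + 3 * Real.sqrt 5) / 4 := by
  nlinarith [sasq, Real.sqrt_nonneg (9 + 3 * Real.sqrt 5), s5lb]
lemma aub : Real.sqrt (9 + 3 * Real.sqrt 5) / 4 ≤ 1 := by
  nlinarith [sasq, Real.sqrt_nonneg (9 + 3 * Real.sqrt 5), s5ub]

lemma disc_nonneg {τ : ℝ} (h1 : Real.sqrt (9 + 3 * Real.sqrt 5) / 4 ≤ τ) (h2 : τ ≤ 1) :
    0 ≤ (8 * τ ^ 2 - 9 / 2) ^ 2 - 45 / 4 := by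
  have h0 : (0:ℝ) ≤ Real.sqrt (9 + 3 * Real.sqrt 5) / 4 := by positivity
  have hsq : (9 + 3 * Real.sqrt 5) / 16 ≤ τ ^ 2 := by nlinarith [sasq]
  nlinarith [s5sq, Real.sqrt_nonneg 5]

lemma hat_eq {τ : ℝ} (h1 : (0:ℝ) ≤ τ) (h2 : τ ≤ 1) :
    hatTA τ = ((3 - τ) * ((27 - 8 * τ ^ 2) + Real.sqrt ((8 * τ ^ 2 - 9 / 2) ^ 2 - 45 / 4)))
      / (2 * (18 - 9 * τ ^ 2)) := by
  have hD : (18 : ℝ) - 9 * τ ^ 2 ≠ 0 := by nlinarith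
  unfold hatTA TA
  field_simp

lemma root_eq {τ : ℝ} (h1 : (0:ℝ) ≤ τ) (h2 : τ ≤ 1)
    (hd : 0 ≤ (8 * τ ^ 2 - 9 / 2) ^ 2 - 45 / 4) :
    9 * (2 - τ ^ 2) * (hatTA τ) ^ 2 - (27 - 8 * τ ^ 2) * (3 - τ) * (hatTA τ)
      + 10 * (3 - τ) ^ 2 = 0 := by
  have hD : (18 : ℝ) - 9 * τ ^ 2 ≠ 0 := by nlinarith
  have hR : (Real.sqrt ((8 * τ ^ 2 - 9 / 2) ^ 2 - 45 / 4)) ^ 2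
      = (8 * τ ^ 2 - 9 / 2) ^ 2 - 45 / 4 := Real.sq_sqrt hd
  set R := Real.sqrt ((8 * τ ^ 2 - 9 / 2) ^ 2 - 45 / 4) with hRdef
  have key : R ^ 2 - (27 - 8 * τ ^ 2) ^ 2 + 40 * (18 - 9 * τ ^ 2) = 0 := by
    linear_combination hR
  have e1 : 2 * (18 - 9 * τ ^ 2) * hatTA τ = (3 - τ) * (27 - 8 * τ ^ 2 + R) := by
    unfold hatTA TA
    rw [← hRdef]
    field_simp
  have h4D : (4 * (18 - 9 * τ ^ 2)) *
      (9 * (2 - τ ^ 2) * (hatTA τ) ^ 2 - (27 - 8 * τ ^ 2) * (3 - τ) * (hatTA τ)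
        + 10 * (3 - τ) ^ 2) = 0 := by
    linear_combination (2 * (18 - 9 * τ ^ 2) * hatTA τ + (3 - τ) * (27 - 8 * τ ^ 2 + R)
      - 2 * (27 - 8 * τ ^ 2) * (3 - τ)) * e1 + (3 - τ) ^ 2 * key
  have hD4 : (4 : ℝ) * (18 - 9 * τ ^ 2) ≠ 0 := by
    intro h; exact hD (by linarith [mul_eq_zero.mp h])
  exact (mul_eq_zero.mp h4D).resolve_left hD4

lemma hat_bounds {τ : ℝ} (h1 : (0.99:ℝ) ≤ τ) (h2 : τ ≤ 1) :
    2 ≤ hatTA τ ∧ hatTA τ ≤ 2.3 := by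
  have h0 : (0:ℝ) ≤ τ := by linarith
  rw [hat_eq h0 h2]
  set R := Real.sqrt ((8 * τ ^ 2 - 9 / 2) ^ 2 - 45 / 4) with hRdef
  have hR0 : 0 ≤ R := Real.sqrt_nonneg _
  have hR1 : R ≤ 1 := by
    rw [hRdef]
    refine Real.sqrt_le_one.mpr ?_
    have ht : τ ^ 2 ≤ 1 := by nlinarith
    have ht2 : (0:ℝ) ≤ 8 * τ ^ 2 - 1 := by nlinarith
    nlinarith [mul_nonneg (by linarith : (0:ℝ) ≤ 1 - τ ^ 2) ht2]
  have hDpos : (0:ℝ) < 2 * (18 - 9 * τ ^ 2) := by nlinarith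
  constructor
  · rw [le_div_iff₀ hDpos]; nlinarith
  · rw [div_le_iff₀ hDpos]; nlinarith

lemma sq_le_imp {x c : ℝ} (h : x ^ 2 ≤ c ^ 2) (hc : 0 ≤ c) : x ≤ c := by
  nlinarith

set_option maxHeartbeats 1000000 in
lemma mono_step {τ₁ τ₂ : ℝ}
    (ha1 : Real.sqrt (9 + 3 * Real.sqrt 5) / 4 ≤ τ₁) (hb1 : τ₁ ≤ 1)
    (ha2 : Real.sqrt (9 + 3 * Real.sqrt 5) / 4 ≤ τ₂) (hb2 : τ₂ ≤ 1)
    (hle : τ₁ ≤ τ₂) : hatTA τ₁ ≤ hatTA τ₂ := by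
  have h199 : (0.99:ℝ) ≤ τ₁ := le_trans alb ha1
  have h299 : (0.99:ℝ) ≤ τ₂ := le_trans alb ha2
  have h10 : (0:ℝ) ≤ τ₁ := by linarith
  have h20 : (0:ℝ) ≤ τ₂ := by linarith
  set y := hatTA τ₁ with hy
  obtain ⟨hy2, hy23⟩ := hat_bounds h199 hb1
  have hF1 : 9 * (2 - τ₁ ^ 2) * y ^ 2 - (27 - 8 * τ₁ ^ 2) * (3 - τ₁) * y
      + 10 * (3 - τ₁) ^ 2 = 0 := root_eq h10 hb1 (disc_nonneg ha1 hb1)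
  -- bracket nonpositive
  have hbr : 27 * y - 60 + (τ₁ + τ₂) * (-9 * y ^ 2 + 24 * y + 10)
      - 8 * y * (τ₁ ^ 2 + τ₁ * τ₂ + τ₂ ^ 2) ≤ 0 := by
    nlinarith [sq_nonneg (y - 2), sq_nonneg (y - 2.3), sq_nonneg (τ₁ - 1), sq_nonneg (τ₂ - 1),
      mul_nonneg (by linarith : (0:ℝ) ≤ y - 2) (by linarith : (0:ℝ) ≤ 1 - τ₁),
      mul_nonneg (by linarith : (0:ℝ) ≤ y - 2) (by linarith : (0:ℝ) ≤ 1 - τ₂),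
      mul_nonneg (by linarith : (0:ℝ) ≤ 2.3 - y) (by linarith : (0:ℝ) ≤ 1 - τ₁)]
  have hF2 : 9 * (2 - τ₂ ^ 2) * y ^ 2 - (27 - 8 * τ₂ ^ 2) * (3 - τ₂) * y
      + 10 * (3 - τ₂) ^ 2 ≤ 0 := by
    have hident : 9 * (2 - τ₂ ^ 2) * y ^ 2 - (27 - 8 * τ₂ ^ 2) * (3 - τ₂) * y
        + 10 * (3 - τ₂) ^ 2
        = (9 * (2 - τ₁ ^ 2) * y ^ 2 - (27 - 8 * τ₁ ^ 2) * (3 - τ₁) * y + 10 * (3 - τ₁) ^ 2)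
          + (τ₂ - τ₁) * (27 * y - 60 + (τ₁ + τ₂) * (-9 * y ^ 2 + 24 * y + 10)
            - 8 * y * (τ₁ ^ 2 + τ₁ * τ₂ + τ₂ ^ 2)) := by ring
    rw [hident, hF1]
    have := mul_nonneg (by linarith : (0:ℝ) ≤ τ₂ - τ₁) (by linarith : (0:ℝ) ≤ -(27 * y - 60 + (τ₁ + τ₂) * (-9 * y ^ 2 + 24 * y + 10) - 8 * y * (τ₁ ^ 2 + τ₁ * τ₂ + τ₂ ^ 2)))
    nlinarith [this]
  -- now conclude y ≤ hatTA τ₂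
  set R := Real.sqrt ((8 * τ₂ ^ 2 - 9 / 2) ^ 2 - 45 / 4) with hRdef
  have hR0 : 0 ≤ R := Real.sqrt_nonneg _
  have hRsq : R ^ 2 = (8 * τ₂ ^ 2 - 9 / 2) ^ 2 - 45 / 4 :=
    Real.sq_sqrt (disc_nonneg ha2 hb2)
  have hDpos : (0:ℝ) < 2 * (18 - 9 * τ₂ ^ 2) := by nlinarith
  have hsq : (2 * (18 - 9 * τ₂ ^ 2) * y - (27 - 8 * τ₂ ^ 2) * (3 - τ₂)) ^ 2
      ≤ ((3 - τ₂) * R) ^ 2 := by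
    have hid : (2 * (18 - 9 * τ₂ ^ 2) * y - (27 - 8 * τ₂ ^ 2) * (3 - τ₂)) ^ 2
        - ((3 - τ₂) * R) ^ 2
        = 4 * (18 - 9 * τ₂ ^ 2) * (9 * (2 - τ₂ ^ 2) * y ^ 2
          - (27 - 8 * τ₂ ^ 2) * (3 - τ₂) * y + 10 * (3 - τ₂) ^ 2) := by
      linear_combination (-(3 - τ₂) ^ 2) * hRsq
    linarith [mul_nonpos_of_nonneg_of_nonpos (by linarith : (0:ℝ) ≤ 4 * (18 - 9 * τ₂ ^ 2)) hF2, hid]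
  have hRpos : (0:ℝ) ≤ (3 - τ₂) * R := mul_nonneg (by linarith) hR0
  have hkey : 2 * (18 - 9 * τ₂ ^ 2) * y - (27 - 8 * τ₂ ^ 2) * (3 - τ₂) ≤ (3 - τ₂) * R :=
    sq_le_imp hsq hRpos
  have e2 : 2 * (18 - 9 * τ₂ ^ 2) * hatTA τ₂ = (3 - τ₂) * (27 - 8 * τ₂ ^ 2 + R) := by
    unfold hatTA TA
    rw [← hRdef]
    have hD : (18 : ℝ) - 9 * τ₂ ^ 2 ≠ 0 := by nlinarith
    field_simp
  have : 2 * (18 - 9 * τ₂ ^ 2) * y ≤ 2 * (18 - 9 * τ₂ ^ 2) * hatTA τ₂ := by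
    rw [e2]; ring_nf; ring_nf at hkey; linarith
  exact le_of_mul_le_mul_left this hDpos

theorem stmt_15 :
    (∀ τ : ℝ, Real.sqrt (9 + 3 * Real.sqrt 5) / 4 ≤ τ → τ ≤ 1 →
      0 ≤ (8 * τ ^ 2 - 9 / 2) ^ 2 - 45 / 4) ∧
    MonotoneOn hatTA (Set.Icc (Real.sqrt (9 + 3 * Real.sqrt 5) / 4) 1) ∧
    hatTA 1 = 20 / 9 ∧
    hatTA (Real.sqrt (9 + 3 * Real.sqrt 5) / 4) =
      (30 + 2 * Real.sqrt 5) / 11 -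
        (15 + Real.sqrt 5) * Real.sqrt (9 + 3 * Real.sqrt 5) / 66 := by
  refine ⟨fun τ h1 h2 => disc_nonneg h1 h2, ?_, ?_, ?_⟩
  · intro τ₁ h₁ τ₂ h₂ hle
    exact mono_step h₁.1 h₁.2 h₂.1 h₂.2 hle
  · have h1 : ((8 * (1:ℝ) ^ 2 - 9 / 2) ^ 2 - 45 / 4) = 1 := by norm_num
    rw [hat_eq (by norm_num) (le_refl 1), h1, Real.sqrt_one]
    norm_num
  · set s5 := Real.sqrt 5 with hs5def
    set sa := Real.sqrt (9 + 3 * s5) with hsadef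
    have hs5 : s5 ^ 2 = 5 := s5sq
    have hsa : sa ^ 2 = 9 + 3 * s5 := sasq
    have hd0 : ((8 * (sa / 4) ^ 2 - 9 / 2) ^ 2 - 45 / 4) = 0 := by
      linear_combination (9/4) * hs5 + ((sa ^ 2 + 3 * s5 - 9) / 4) * hsa
    have hs5b1 : (2.236:ℝ) ≤ s5 := s5lb
    have hs5b2 : s5 ≤ 2.2361 := s5ub
    have hTA : TA (sa / 4) = 4 * (15 + s5) / 33 := by
      unfold TA
      rw [hd0, Real.sqrt_zero]
      have hD : (18 : ℝ) - 9 * (sa / 4) ^ 2 ≠ 0 := by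
        have : (sa / 4) ^ 2 = (9 + 3 * s5) / 16 := by
          rw [div_pow, hsa]; norm_num
        rw [this]; intro h; nlinarith
      rw [zero_div, add_zero, div_eq_iff hD]
      have h2 : (sa / 4) ^ 2 = (9 + 3 * s5) / 16 := by
        rw [div_pow, hsa]; norm_num
      rw [h2]
      linear_combination (9/44) * hs5
    unfold hatTA
    rw [hTA]
    ring
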